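/- For an integer b ≥ 2, let M2 be the presented group on generators ρ0, ρ1, ρ2 with relation set {ρ0^2, ρ1^2, ρ2^2, (ρ0ρ1)^4, (ρ1ρ2)^4, (ρ0ρ2)^2, (ρ0ρ1ρ2)^{2b}}. Then M2 has order 16b^2, and in M2 the images of ρ0, ρ1, ρ2 and ρ0ρ2 have order exactly 2, the images of ρ0ρ1 and ρ1ρ2 have order exactly 4, and the image of ρ0ρ1ρ2 has order exactly 2b. -/

import Mathlib

open Equiv

namespace Stmt6

def r0 : FreeGroup (Fin 3) := FreeGroup.of 0
def r1 : FreeGroup (Fin 3) := FreeGroup.of 1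
def r2 : FreeGroup (Fin 3) := FreeGroup.of 2

/-- The relations of the presented group `M2` of Proposition 2.3. -/
def rels (b : ℕ) : Set (FreeGroup (Fin 3)) :=
  {r0 ^ 2, r1 ^ 2, r2 ^ 2, (r0 * r1) ^ 4, (r1 * r2) ^ 4, (r0 * r2) ^ 2,
   (r0 * r1 * r2) ^ (2 * b)}

/-- The image of the `i`-th generator in `M2`. -/
def g (b : ℕ) (i : Fin 3) : PresentedGroup (rels b) := PresentedGroup.of i

/-! ### Generic group-word lemmas -/

section Generic
variable {G : Type*} [Group G]

lemma K0 {x0 : G} (h0 : x0*x0 = 1) : ∀ w : G, x0*(x0*w) = w :=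
  fun w => by rw [← mul_assoc, h0, one_mul]
lemma Cw {x0 x2 : G} (hc : x0*x2 = x2*x0) : ∀ w : G, x2*(x0*w) = x0*(x2*w) :=
  fun w => by rw [← mul_assoc, ← hc, mul_assoc]
lemma Qw {x0 x1 : G} (hQ : x0*(x1*(x0*x1)) = x1*(x0*(x1*x0))) :
    ∀ w : G, x1*(x0*(x1*(x0*w))) = x0*(x1*(x0*(x1*w))) := fun w => by
  calc x1*(x0*(x1*(x0*w))) = (x1*(x0*(x1*x0)))*w := by group
    _ = (x0*(x1*(x0*x1)))*w := by rw [hQ]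
    _ = x0*(x1*(x0*(x1*w))) := by group

lemma cpow {s t : G} (hs : s*s = 1) (n : ℕ) : s*(t^n*s) = (s*(t*s))^n := by
  have hinv : s⁻¹ = s := inv_eq_of_mul_eq_one_right hs
  have h1 : s*(t*s) = s*t*s⁻¹ := by rw [hinv]; group
  have h2 : (s*(t*s))^n = s*t^n*s⁻¹ := by rw [h1, conj_pow]
  rw [h2, hinv]; group

variable {x0 x1 x2 : G}
  (h0 : x0*x0 = 1) (h1 : x1*x1 = 1) (h2 : x2*x2 = 1)
  (hQ : x0*(x1*(x0*x1)) = x1*(x0*(x1*x0)))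
  (hR : x1*(x2*(x1*x2)) = x2*(x1*(x2*x1)))
  (hc : x0*x2 = x2*x0)

section
include h0 h1 h2 hQ hR hc
set_option linter.unusedSectionVars false

lemma T1 : x1*((x0*x1*x2)^2*x1) = (x0*x1*x2)^2 := by
  simp only [sq, mul_assoc]
  simp only [K0 h0, K0 h1, K0 h2, Cw hc, Qw hQ, Qw hR, hc.symm, hQ.symm, hR.symm,
    h0, h1, h2, mul_one, one_mul]

lemma T5 : x2*((x0*x1*x2*x1)*x2) = x0*x1*x2*x1 := by
  simp only [sq, mul_assoc]
  simp only [K0 h0, K0 h1, K0 h2, Cw hc, Qw hQ, Qw hR, hc.symm, hQ.symm, hR.symm,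
    h0, h1, h2, mul_one, one_mul]

lemma T7 : (x0*x1*x2*x1)*(x0*x1*x2*x1) = (x0*x1*x2)^2*(x2*((x0*x1*x2)^2*x2)) := by
  simp only [sq, mul_assoc]
  simp only [K0 h0, K0 h1, K0 h2, Cw hc, Qw hQ, Qw hR, hc.symm, hQ.symm, hR.symm,
    h0, h1, h2, mul_one, one_mul]

lemma T6 : x0*((x0*x1*x2)^2*x0)
    = (x1*(x2*(x1*x0)))*((x1*(x2*(x1*x0)))*(x0*x1*x2)^2) := by
  simp only [sq, mul_assoc]
  simp only [K0 h0, K0 h1, K0 h2, Cw hc, Qw hQ, Qw hR, hc.symm, hQ.symm, hR.symm,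
    h0, h1, h2, mul_one, one_mul]

lemma T4 : x1*((x0*x1*x2*x1)*x1) = (x1*(x2*(x1*x0)))*(x0*x1*x2)^2 := by
  simp only [sq, mul_assoc]
  simp only [K0 h0, K0 h1, K0 h2, Cw hc, Qw hQ, Qw hR, hc.symm, hQ.symm, hR.symm,
    h0, h1, h2, mul_one, one_mul]

lemma T3 : x0*((x0*x1*x2*x1)*x0) = x1*(x2*(x1*x0)) := by
  simp only [sq, mul_assoc]
  simp only [K0 h0, K0 h1, K0 h2, Cw hc, Qw hQ, Qw hR, hc.symm, hQ.symm, hR.symm,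
    h0, h1, h2, mul_one, one_mul]

lemma T8 : x0 = (x0*x1*x2*x1)*(x1*(x2*x1)) := by
  simp only [sq, mul_assoc]
  simp only [K0 h0, K0 h1, K0 h2, Cw hc, Qw hQ, Qw hR, hc.symm, hQ.symm, hR.symm,
    h0, h1, h2, mul_one, one_mul]

lemma T2 : (x0*x1*x2*x1)*(x0*x1*x2)^2 = (x0*x1*x2)^2*(x0*x1*x2*x1) := by
  simp only [sq, mul_assoc]
  simp only [K0 h0, K0 h1, K0 h2, Cw hc, Qw hQ, Qw hR, hc.symm, hQ.symm, hR.symm,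
    h0, h1, h2, mul_one, one_mul]

end
end Generic

/-! ### Relations inside the presented group -/

lemma rel_one (b : ℕ) {r : FreeGroup (Fin 3)} (hr : r ∈ rels b) :
    PresentedGroup.mk (rels b) r = 1 :=
  (QuotientGroup.eq_one_iff _).2 (Subgroup.subset_normalClosure hr)

lemma hsq0 (b : ℕ) : (g b 0) ^ 2 = 1 := by
  have := rel_one b (show r0 ^ 2 ∈ rels b by simp [rels])
  rw [map_pow] at this; exact this
lemma hsq1 (b : ℕ) : (g b 1) ^ 2 = 1 := by
  have := rel_one b (show r1 ^ 2 ∈ rels b by simp [rels])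
  rw [map_pow] at this; exact this
lemma hsq2 (b : ℕ) : (g b 2) ^ 2 = 1 := by
  have := rel_one b (show r2 ^ 2 ∈ rels b by simp [rels])
  rw [map_pow] at this; exact this
lemma h01 (b : ℕ) : (g b 0 * g b 1) ^ 4 = 1 := by
  have := rel_one b (show (r0 * r1) ^ 4 ∈ rels b by simp [rels])
  rw [map_pow, map_mul] at this; exact this
lemma h12 (b : ℕ) : (g b 1 * g b 2) ^ 4 = 1 := by
  have := rel_one b (show (r1 * r2) ^ 4 ∈ rels b by simp [rels])
  rw [map_pow, map_mul] at this; exact this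
lemma h02 (b : ℕ) : (g b 0 * g b 2) ^ 2 = 1 := by
  have := rel_one b (show (r0 * r2) ^ 2 ∈ rels b by simp [rels])
  rw [map_pow, map_mul] at this; exact this
lemma htau (b : ℕ) : (g b 0 * g b 1 * g b 2) ^ (2 * b) = 1 := by
  have := rel_one b (show (r0 * r1 * r2) ^ (2 * b) ∈ rels b by simp [rels])
  rw [map_pow, map_mul, map_mul] at this; exact this

section M2
variable (b : ℕ)

local notation "x0" => g b 0
local notation "x1" => g b 1
local notation "x2" => g b 2

lemma h0b : x0 * x0 = 1 := by have := hsq0 b; rwa [sq] at this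
lemma h1b : x1 * x1 = 1 := by have := hsq1 b; rwa [sq] at this
lemma h2b : x2 * x2 = 1 := by have := hsq2 b; rwa [sq] at this

lemma i0b : (x0)⁻¹ = x0 := inv_eq_of_mul_eq_one_right (h0b b)
lemma i1b : (x1)⁻¹ = x1 := inv_eq_of_mul_eq_one_right (h1b b)
lemma i2b : (x2)⁻¹ = x2 := inv_eq_of_mul_eq_one_right (h2b b)

lemma hQb : x0*(x1*(x0*x1)) = x1*(x0*(x1*x0)) := by
  have h4 : ((x0*x1)^2)*((x0*x1)^2) = 1 := by
    rw [← pow_add]; exact h01 b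
  have h5 : (x0*x1)^2 = ((x0*x1)^2)⁻¹ := eq_inv_of_mul_eq_one_left h4
  calc x0*(x1*(x0*x1)) = (x0*x1)^2 := by rw [sq]; group
    _ = ((x0*x1)^2)⁻¹ := h5
    _ = x1*(x0*(x1*x0)) := by
        simp only [sq, mul_inv_rev, i0b, i1b]; group

lemma hRb : x1*(x2*(x1*x2)) = x2*(x1*(x2*x1)) := by
  have h4 : ((x1*x2)^2)*((x1*x2)^2) = 1 := by
    rw [← pow_add]; exact h12 b
  have h5 : (x1*x2)^2 = ((x1*x2)^2)⁻¹ := eq_inv_of_mul_eq_one_left h4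
  calc x1*(x2*(x1*x2)) = (x1*x2)^2 := by rw [sq]; group
    _ = ((x1*x2)^2)⁻¹ := h5
    _ = x2*(x1*(x2*x1)) := by
        simp only [sq, mul_inv_rev, i1b, i2b]; group

lemma hcb : x0*x2 = x2*x0 := by
  have h4 : (x0*x2)*(x0*x2) = 1 := by have := h02 b; rwa [sq] at this
  have h5 : x0*x2 = (x0*x2)⁻¹ := eq_inv_of_mul_eq_one_left h4
  calc x0*x2 = (x0*x2)⁻¹ := h5
    _ = x2*x0 := by simp only [mul_inv_rev, i0b, i2b]

end M2

/-! ### Normal-form data -/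

def bb (b : ℕ) : PresentedGroup (rels b) := g b 0 * g b 1 * g b 2 * g b 1
def aa (b : ℕ) : PresentedGroup (rels b) := (g b 0 * g b 1 * g b 2)^2
def dd (b : ℕ) : Fin 8 → PresentedGroup (rels b) :=
  ![1, g b 1, g b 2, g b 1 * g b 2, g b 2 * g b 1,
    g b 1 * (g b 2 * g b 1), g b 2 * (g b 1 * g b 2), g b 1 * (g b 2 * (g b 1 * g b 2))]
def sig1 : Fin 8 → Fin 8 := ![1,0,3,2,5,4,7,6]
def sig2 : Fin 8 → Fin 8 := ![2,4,0,6,1,7,3,5]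
def sig0 : Fin 8 → Fin 8 := ![5,3,7,1,6,0,4,2]
lemma dd_0 (b : ℕ) : dd b 0 = 1 := rfl
lemma dd_1 (b : ℕ) : dd b 1 = g b 1 := rfl
lemma dd_2 (b : ℕ) : dd b 2 = g b 2 := rfl
lemma dd_3 (b : ℕ) : dd b 3 = g b 1 * g b 2 := rfl
lemma dd_4 (b : ℕ) : dd b 4 = g b 2 * g b 1 := rfl
lemma dd_5 (b : ℕ) : dd b 5 = g b 1 * (g b 2 * g b 1) := rfl
lemma dd_6 (b : ℕ) : dd b 6 = g b 2 * (g b 1 * g b 2) := rfl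
lemma dd_7 (b : ℕ) : dd b 7 = g b 1 * (g b 2 * (g b 1 * g b 2)) := rfl
lemma sig1_0 : sig1 0 = 1 := rfl
lemma sig1_1 : sig1 1 = 0 := rfl
lemma sig1_2 : sig1 2 = 3 := rfl
lemma sig1_3 : sig1 3 = 2 := rfl
lemma sig1_4 : sig1 4 = 5 := rfl
lemma sig1_5 : sig1 5 = 4 := rfl
lemma sig1_6 : sig1 6 = 7 := rfl
lemma sig1_7 : sig1 7 = 6 := rfl
lemma sig2_0 : sig2 0 = 2 := rfl
lemma sig2_1 : sig2 1 = 4 := rfl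
lemma sig2_2 : sig2 2 = 0 := rfl
lemma sig2_3 : sig2 3 = 6 := rfl
lemma sig2_4 : sig2 4 = 1 := rfl
lemma sig2_5 : sig2 5 = 7 := rfl
lemma sig2_6 : sig2 6 = 3 := rfl
lemma sig2_7 : sig2 7 = 5 := rfl
lemma sig0_0 : sig0 0 = 5 := rfl
lemma sig0_1 : sig0 1 = 3 := rfl
lemma sig0_2 : sig0 2 = 7 := rfl
lemma sig0_3 : sig0 3 = 1 := rfl
lemma sig0_4 : sig0 4 = 6 := rfl
lemma sig0_5 : sig0 5 = 0 := rfl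
lemma sig0_6 : sig0 6 = 4 := rfl
lemma sig0_7 : sig0 7 = 2 := rfl

def ff (b : ℕ) : Fin (2*b) × Fin b × Fin 8 → PresentedGroup (rels b) :=
  fun p => bb b ^ (p.1 : ℕ) * (aa b ^ (p.2.1 : ℕ) * dd b p.2.2)

section M2b
variable (b : ℕ)

local notation "x0" => g b 0
local notation "x1" => g b 1
local notation "x2" => g b 2

lemma hbinv : (bb b)⁻¹ = x1*(x2*(x1*x0)) := by
  rw [bb]
  rw [mul_inv_rev, mul_inv_rev, mul_inv_rev, i0b, i1b, i2b]

lemma conj1a : x1*(aa b*x1) = aa b := T1 (h0b b) (h1b b) (h2b b) (hQb b) (hRb b) (hcb b)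
lemma conj2b : x2*(bb b*x2) = bb b := T5 (h0b b) (h1b b) (h2b b) (hQb b) (hRb b) (hcb b)
lemma conj0b : x0*(bb b*x0) = (bb b)⁻¹ := by
  rw [hbinv]; exact T3 (h0b b) (h1b b) (h2b b) (hQb b) (hRb b) (hcb b)
lemma conj1b : x1*(bb b*x1) = (bb b)⁻¹ * aa b := by
  rw [hbinv]; exact T4 (h0b b) (h1b b) (h2b b) (hQb b) (hRb b) (hcb b)
lemma conj0a : x0*(aa b*x0) = (bb b)⁻¹*((bb b)⁻¹*aa b) := by
  rw [hbinv]; exact T6 (h0b b) (h1b b) (h2b b) (hQb b) (hRb b) (hcb b)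
lemma hJ : bb b * bb b = aa b * (x2*(aa b*x2)) :=
  T7 (h0b b) (h1b b) (h2b b) (hQb b) (hRb b) (hcb b)
lemma conj2a : x2*(aa b*x2) = (aa b)⁻¹*(bb b*bb b) := by
  rw [hJ b]; group
lemma hx0d : x0 = bb b * (x1*(x2*x1)) :=
  T8 (h0b b) (h1b b) (h2b b) (hQb b) (hRb b) (hcb b)
lemma hcommb : Commute (bb b) (aa b) :=
  T2 (h0b b) (h1b b) (h2b b) (hQb b) (hRb b) (hcb b)

lemma apow : aa b ^ b = 1 := by
  rw [aa, ← pow_mul]; exact htau b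

lemma bpow : bb b ^ (2*b) = 1 := by
  have hsq : bb b ^ 2 = aa b * (x2*(aa b*x2)) := by rw [sq]; exact hJ b
  have hcomm2 : Commute (aa b) (x2*(aa b*x2)) := by
    rw [conj2a]
    exact ((Commute.refl (aa b)).inv_right).mul_right
      ((hcommb b).symm.mul_right (hcommb b).symm)
  have hcpow : (x2*(aa b*x2))^b = x2*(aa b^b*x2) := by rw [cpow (h2b b)]
  rw [pow_mul, hsq, hcomm2.mul_pow, hcpow, apow, one_mul, one_mul, h2b b]

/-! ### dihedral tables -/

lemma dtab1_0 : (x1) * dd b 0 = dd b (sig1 0) := by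
  simp only [dd_0, dd_1, dd_2, dd_3, dd_4, dd_5, dd_6, dd_7, sig1_0, mul_assoc,
      K0 (h0b b), K0 (h1b b), K0 (h2b b), Cw (hcb b), Qw (hQb b), Qw (hRb b),
      (hcb b).symm, (hQb b).symm, (hRb b).symm, h0b b, h1b b, h2b b, mul_one, one_mul]
lemma dtab1_1 : (x1) * dd b 1 = dd b (sig1 1) := by
  simp only [dd_0, dd_1, dd_2, dd_3, dd_4, dd_5, dd_6, dd_7, sig1_1, mul_assoc,
      K0 (h0b b), K0 (h1b b), K0 (h2b b), Cw (hcb b), Qw (hQb b), Qw (hRb b),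
      (hcb b).symm, (hQb b).symm, (hRb b).symm, h0b b, h1b b, h2b b, mul_one, one_mul]
lemma dtab1_2 : (x1) * dd b 2 = dd b (sig1 2) := by
  simp only [dd_0, dd_1, dd_2, dd_3, dd_4, dd_5, dd_6, dd_7, sig1_2, mul_assoc,
      K0 (h0b b), K0 (h1b b), K0 (h2b b), Cw (hcb b), Qw (hQb b), Qw (hRb b),
      (hcb b).symm, (hQb b).symm, (hRb b).symm, h0b b, h1b b, h2b b, mul_one, one_mul]
lemma dtab1_3 : (x1) * dd b 3 = dd b (sig1 3) := by
  simp only [dd_0, dd_1, dd_2, dd_3, dd_4, dd_5, dd_6, dd_7, sig1_3, mul_assoc,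
      K0 (h0b b), K0 (h1b b), K0 (h2b b), Cw (hcb b), Qw (hQb b), Qw (hRb b),
      (hcb b).symm, (hQb b).symm, (hRb b).symm, h0b b, h1b b, h2b b, mul_one, one_mul]
lemma dtab1_4 : (x1) * dd b 4 = dd b (sig1 4) := by
  simp only [dd_0, dd_1, dd_2, dd_3, dd_4, dd_5, dd_6, dd_7, sig1_4, mul_assoc,
      K0 (h0b b), K0 (h1b b), K0 (h2b b), Cw (hcb b), Qw (hQb b), Qw (hRb b),
      (hcb b).symm, (hQb b).symm, (hRb b).symm, h0b b, h1b b, h2b b, mul_one, one_mul]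
lemma dtab1_5 : (x1) * dd b 5 = dd b (sig1 5) := by
  simp only [dd_0, dd_1, dd_2, dd_3, dd_4, dd_5, dd_6, dd_7, sig1_5, mul_assoc,
      K0 (h0b b), K0 (h1b b), K0 (h2b b), Cw (hcb b), Qw (hQb b), Qw (hRb b),
      (hcb b).symm, (hQb b).symm, (hRb b).symm, h0b b, h1b b, h2b b, mul_one, one_mul]
lemma dtab1_6 : (x1) * dd b 6 = dd b (sig1 6) := by
  simp only [dd_0, dd_1, dd_2, dd_3, dd_4, dd_5, dd_6, dd_7, sig1_6, mul_assoc,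
      K0 (h0b b), K0 (h1b b), K0 (h2b b), Cw (hcb b), Qw (hQb b), Qw (hRb b),
      (hcb b).symm, (hQb b).symm, (hRb b).symm, h0b b, h1b b, h2b b, mul_one, one_mul]
lemma dtab1_7 : (x1) * dd b 7 = dd b (sig1 7) := by
  simp only [dd_0, dd_1, dd_2, dd_3, dd_4, dd_5, dd_6, dd_7, sig1_7, mul_assoc,
      K0 (h0b b), K0 (h1b b), K0 (h2b b), Cw (hcb b), Qw (hQb b), Qw (hRb b),
      (hcb b).symm, (hQb b).symm, (hRb b).symm, h0b b, h1b b, h2b b, mul_one, one_mul]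
lemma dtab1 : ∀ k, (x1) * dd b k = dd b (sig1 k) := by
  intro k
  fin_cases k
  · exact dtab1_0 b
  · exact dtab1_1 b
  · exact dtab1_2 b
  · exact dtab1_3 b
  · exact dtab1_4 b
  · exact dtab1_5 b
  · exact dtab1_6 b
  · exact dtab1_7 b

lemma dtab2_0 : (x2) * dd b 0 = dd b (sig2 0) := by
  simp only [dd_0, dd_1, dd_2, dd_3, dd_4, dd_5, dd_6, dd_7, sig2_0, mul_assoc,
      K0 (h0b b), K0 (h1b b), K0 (h2b b), Cw (hcb b), Qw (hQb b), Qw (hRb b),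
      (hcb b).symm, (hQb b).symm, (hRb b).symm, h0b b, h1b b, h2b b, mul_one, one_mul]
lemma dtab2_1 : (x2) * dd b 1 = dd b (sig2 1) := by
  simp only [dd_0, dd_1, dd_2, dd_3, dd_4, dd_5, dd_6, dd_7, sig2_1, mul_assoc,
      K0 (h0b b), K0 (h1b b), K0 (h2b b), Cw (hcb b), Qw (hQb b), Qw (hRb b),
      (hcb b).symm, (hQb b).symm, (hRb b).symm, h0b b, h1b b, h2b b, mul_one, one_mul]
lemma dtab2_2 : (x2) * dd b 2 = dd b (sig2 2) := by
  simp only [dd_0, dd_1, dd_2, dd_3, dd_4, dd_5, dd_6, dd_7, sig2_2, mul_assoc,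
      K0 (h0b b), K0 (h1b b), K0 (h2b b), Cw (hcb b), Qw (hQb b), Qw (hRb b),
      (hcb b).symm, (hQb b).symm, (hRb b).symm, h0b b, h1b b, h2b b, mul_one, one_mul]
lemma dtab2_3 : (x2) * dd b 3 = dd b (sig2 3) := by
  simp only [dd_0, dd_1, dd_2, dd_3, dd_4, dd_5, dd_6, dd_7, sig2_3, mul_assoc,
      K0 (h0b b), K0 (h1b b), K0 (h2b b), Cw (hcb b), Qw (hQb b), Qw (hRb b),
      (hcb b).symm, (hQb b).symm, (hRb b).symm, h0b b, h1b b, h2b b, mul_one, one_mul]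
lemma dtab2_4 : (x2) * dd b 4 = dd b (sig2 4) := by
  simp only [dd_0, dd_1, dd_2, dd_3, dd_4, dd_5, dd_6, dd_7, sig2_4, mul_assoc,
      K0 (h0b b), K0 (h1b b), K0 (h2b b), Cw (hcb b), Qw (hQb b), Qw (hRb b),
      (hcb b).symm, (hQb b).symm, (hRb b).symm, h0b b, h1b b, h2b b, mul_one, one_mul]
lemma dtab2_5 : (x2) * dd b 5 = dd b (sig2 5) := by
  simp only [dd_0, dd_1, dd_2, dd_3, dd_4, dd_5, dd_6, dd_7, sig2_5, mul_assoc,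
      K0 (h0b b), K0 (h1b b), K0 (h2b b), Cw (hcb b), Qw (hQb b), Qw (hRb b),
      (hcb b).symm, (hQb b).symm, (hRb b).symm, h0b b, h1b b, h2b b, mul_one, one_mul]
lemma dtab2_6 : (x2) * dd b 6 = dd b (sig2 6) := by
  simp only [dd_0, dd_1, dd_2, dd_3, dd_4, dd_5, dd_6, dd_7, sig2_6, mul_assoc,
      K0 (h0b b), K0 (h1b b), K0 (h2b b), Cw (hcb b), Qw (hQb b), Qw (hRb b),
      (hcb b).symm, (hQb b).symm, (hRb b).symm, h0b b, h1b b, h2b b, mul_one, one_mul]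
lemma dtab2_7 : (x2) * dd b 7 = dd b (sig2 7) := by
  simp only [dd_0, dd_1, dd_2, dd_3, dd_4, dd_5, dd_6, dd_7, sig2_7, mul_assoc,
      K0 (h0b b), K0 (h1b b), K0 (h2b b), Cw (hcb b), Qw (hQb b), Qw (hRb b),
      (hcb b).symm, (hQb b).symm, (hRb b).symm, h0b b, h1b b, h2b b, mul_one, one_mul]
lemma dtab2 : ∀ k, (x2) * dd b k = dd b (sig2 k) := by
  intro k
  fin_cases k
  · exact dtab2_0 b
  · exact dtab2_1 b
  · exact dtab2_2 b
  · exact dtab2_3 b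
  · exact dtab2_4 b
  · exact dtab2_5 b
  · exact dtab2_6 b
  · exact dtab2_7 b

lemma dtab5_0 : (x1*(x2*x1)) * dd b 0 = dd b (sig0 0) := by
  simp only [dd_0, dd_1, dd_2, dd_3, dd_4, dd_5, dd_6, dd_7, sig0_0, mul_assoc,
      K0 (h0b b), K0 (h1b b), K0 (h2b b), Cw (hcb b), Qw (hQb b), Qw (hRb b),
      (hcb b).symm, (hQb b).symm, (hRb b).symm, h0b b, h1b b, h2b b, mul_one, one_mul]
lemma dtab5_1 : (x1*(x2*x1)) * dd b 1 = dd b (sig0 1) := by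
  simp only [dd_0, dd_1, dd_2, dd_3, dd_4, dd_5, dd_6, dd_7, sig0_1, mul_assoc,
      K0 (h0b b), K0 (h1b b), K0 (h2b b), Cw (hcb b), Qw (hQb b), Qw (hRb b),
      (hcb b).symm, (hQb b).symm, (hRb b).symm, h0b b, h1b b, h2b b, mul_one, one_mul]
lemma dtab5_2 : (x1*(x2*x1)) * dd b 2 = dd b (sig0 2) := by
  simp only [dd_0, dd_1, dd_2, dd_3, dd_4, dd_5, dd_6, dd_7, sig0_2, mul_assoc,
      K0 (h0b b), K0 (h1b b), K0 (h2b b), Cw (hcb b), Qw (hQb b), Qw (hRb b),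
      (hcb b).symm, (hQb b).symm, (hRb b).symm, h0b b, h1b b, h2b b, mul_one, one_mul]
lemma dtab5_3 : (x1*(x2*x1)) * dd b 3 = dd b (sig0 3) := by
  simp only [dd_0, dd_1, dd_2, dd_3, dd_4, dd_5, dd_6, dd_7, sig0_3, mul_assoc,
      K0 (h0b b), K0 (h1b b), K0 (h2b b), Cw (hcb b), Qw (hQb b), Qw (hRb b),
      (hcb b).symm, (hQb b).symm, (hRb b).symm, h0b b, h1b b, h2b b, mul_one, one_mul]
lemma dtab5_4 : (x1*(x2*x1)) * dd b 4 = dd b (sig0 4) := by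
  simp only [dd_0, dd_1, dd_2, dd_3, dd_4, dd_5, dd_6, dd_7, sig0_4, mul_assoc,
      K0 (h0b b), K0 (h1b b), K0 (h2b b), Cw (hcb b), Qw (hQb b), Qw (hRb b),
      (hcb b).symm, (hQb b).symm, (hRb b).symm, h0b b, h1b b, h2b b, mul_one, one_mul]
lemma dtab5_5 : (x1*(x2*x1)) * dd b 5 = dd b (sig0 5) := by
  simp only [dd_0, dd_1, dd_2, dd_3, dd_4, dd_5, dd_6, dd_7, sig0_5, mul_assoc,
      K0 (h0b b), K0 (h1b b), K0 (h2b b), Cw (hcb b), Qw (hQb b), Qw (hRb b),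
      (hcb b).symm, (hQb b).symm, (hRb b).symm, h0b b, h1b b, h2b b, mul_one, one_mul]
lemma dtab5_6 : (x1*(x2*x1)) * dd b 6 = dd b (sig0 6) := by
  simp only [dd_0, dd_1, dd_2, dd_3, dd_4, dd_5, dd_6, dd_7, sig0_6, mul_assoc,
      K0 (h0b b), K0 (h1b b), K0 (h2b b), Cw (hcb b), Qw (hQb b), Qw (hRb b),
      (hcb b).symm, (hQb b).symm, (hRb b).symm, h0b b, h1b b, h2b b, mul_one, one_mul]
lemma dtab5_7 : (x1*(x2*x1)) * dd b 7 = dd b (sig0 7) := by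
  simp only [dd_0, dd_1, dd_2, dd_3, dd_4, dd_5, dd_6, dd_7, sig0_7, mul_assoc,
      K0 (h0b b), K0 (h1b b), K0 (h2b b), Cw (hcb b), Qw (hQb b), Qw (hRb b),
      (hcb b).symm, (hQb b).symm, (hRb b).symm, h0b b, h1b b, h2b b, mul_one, one_mul]
lemma dtab5 : ∀ k, (x1*(x2*x1)) * dd b k = dd b (sig0 k) := by
  intro k
  fin_cases k
  · exact dtab5_0 b
  · exact dtab5_1 b
  · exact dtab5_2 b
  · exact dtab5_3 b
  · exact dtab5_4 b
  · exact dtab5_5 b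
  · exact dtab5_6 b
  · exact dtab5_7 b

/-! ### membership in the range of `ff` -/

lemma pow_reduceN {G : Type*} [Group G] {x : G} {c : ℕ} (hx : x^c = 1) (m : ℕ) :
    x^(m % c) = x^m := by
  conv_rhs => rw [← Nat.div_add_mod m c]
  rw [pow_add, pow_mul, hx, one_pow, one_mul]

lemma inv_eq_pow {G : Type*} [Group G] {x : G} {c : ℕ} (hc : 1 ≤ c) (hx : x^c = 1) :
    x⁻¹ = x^(c-1) := by
  refine inv_eq_of_mul_eq_one_right ?_
  calc x * x^(c-1) = x^(1 + (c-1)) := by rw [pow_add, pow_one]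
    _ = x^c := by congr 1; omega
    _ = 1 := hx

lemma memS (hb : 2 ≤ b) (m n : ℕ) (k : Fin 8) :
    bb b ^ m * (aa b ^ n * dd b k) ∈ Set.range (ff b) :=
  ⟨(⟨m % (2*b), Nat.mod_lt _ (by omega)⟩, ⟨n % b, Nat.mod_lt _ (by omega)⟩, k), by
    simp only [ff]
    rw [pow_reduceN (bpow b), pow_reduceN (apow b)]⟩

lemma conj1b' (hb : 2 ≤ b) : x1*(bb b*x1) = bb b^(2*b-1) * aa b := by
  rw [conj1b, inv_eq_pow (show 1 ≤ 2*b by omega) (bpow b)]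
lemma conj0b' (hb : 2 ≤ b) : x0*(bb b*x0) = bb b^(2*b-1) := by
  rw [conj0b, inv_eq_pow (show 1 ≤ 2*b by omega) (bpow b)]
lemma conj0a' (hb : 2 ≤ b) : x0*(aa b*x0) = bb b^(2*b-1)*(bb b^(2*b-1)*aa b) := by
  rw [conj0a, inv_eq_pow (show 1 ≤ 2*b by omega) (bpow b)]
lemma conj2a' (hb : 2 ≤ b) : x2*(aa b*x2) = aa b^(b-1)*(bb b*bb b) := by
  rw [conj2a, inv_eq_pow (show 1 ≤ b by omega) (apow b)]

/-! ### closure of the range under left multiplication by generators -/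

lemma stepL1 (hb : 2 ≤ b) (p : Fin (2*b) × Fin b × Fin 8) :
    x1 * ff b p ∈ Set.range (ff b) := by
  obtain ⟨i, j, k⟩ := p
  have e : x1 * ff b (i,j,k)
      = bb b ^ ((2*b-1)*(i:ℕ)) * (aa b ^ ((i:ℕ)+(j:ℕ)) * dd b (sig1 k)) := by
    show x1 * (bb b^(i:ℕ) * (aa b^(j:ℕ) * dd b k)) = _
    calc x1 * (bb b^(i:ℕ) * (aa b^(j:ℕ) * dd b k))
        = (x1*(bb b^(i:ℕ)*x1)) * ((x1*(aa b^(j:ℕ)*x1)) * (x1 * dd b k)) := by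
          simp only [mul_assoc, K0 (h1b b)]
      _ = ((x1*(bb b*x1))^(i:ℕ)) * (((x1*(aa b*x1))^(j:ℕ)) * (x1 * dd b k)) := by
          rw [cpow (h1b b), cpow (h1b b)]
      _ = ((bb b^(2*b-1)*aa b)^(i:ℕ)) * ((aa b)^(j:ℕ) * dd b (sig1 k)) := by
          rw [conj1b' b hb, conj1a, dtab1 b k]
      _ = bb b ^ ((2*b-1)*(i:ℕ)) * (aa b ^ ((i:ℕ)+(j:ℕ)) * dd b (sig1 k)) := by
          rw [((hcommb b).pow_left (2*b-1)).mul_pow, ← pow_mul, mul_assoc,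
            ← mul_assoc (aa b^(i:ℕ)), ← pow_add]
  rw [e]; exact memS b hb _ _ _

lemma stepL2 (hb : 2 ≤ b) (p : Fin (2*b) × Fin b × Fin 8) :
    x2 * ff b p ∈ Set.range (ff b) := by
  obtain ⟨i, j, k⟩ := p
  have e : x2 * ff b (i,j,k)
      = bb b ^ ((i:ℕ)+2*(j:ℕ)) * (aa b ^ ((b-1)*(j:ℕ)) * dd b (sig2 k)) := by
    show x2 * (bb b^(i:ℕ) * (aa b^(j:ℕ) * dd b k)) = _
    calc x2 * (bb b^(i:ℕ) * (aa b^(j:ℕ) * dd b k))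
        = (x2*(bb b^(i:ℕ)*x2)) * ((x2*(aa b^(j:ℕ)*x2)) * (x2 * dd b k)) := by
          simp only [mul_assoc, K0 (h2b b)]
      _ = ((x2*(bb b*x2))^(i:ℕ)) * (((x2*(aa b*x2))^(j:ℕ)) * (x2 * dd b k)) := by
          rw [cpow (h2b b), cpow (h2b b)]
      _ = (bb b^(i:ℕ)) * ((aa b^(b-1)*(bb b*bb b))^(j:ℕ) * dd b (sig2 k)) := by
          rw [conj2b, conj2a' b hb, dtab2 b k]
      _ = (bb b^(i:ℕ)) * (aa b^((b-1)*(j:ℕ)) * (bb b^(2*(j:ℕ)) * dd b (sig2 k))) := by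
          have h' : Commute (aa b^(b-1)) (bb b) := (hcommb b).symm.pow_left (b-1)
          rw [(h'.mul_right h').mul_pow,
            show bb b * bb b = bb b^2 from (sq (bb b)).symm, ← pow_mul, ← pow_mul,
            mul_assoc]
      _ = (bb b^(i:ℕ)) * (bb b^(2*(j:ℕ)) * (aa b^((b-1)*(j:ℕ)) * dd b (sig2 k))) := by
          rw [← mul_assoc (aa b^((b-1)*(j:ℕ))),
            (((hcommb b).symm.pow_pow ((b-1)*(j:ℕ)) (2*(j:ℕ)))).eq, mul_assoc]
      _ = bb b ^ ((i:ℕ)+2*(j:ℕ)) * (aa b ^ ((b-1)*(j:ℕ)) * dd b (sig2 k)) := by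
          rw [← mul_assoc, ← pow_add]
  rw [e]; exact memS b hb _ _ _

lemma stepL0 (hb : 2 ≤ b) (p : Fin (2*b) × Fin b × Fin 8) :
    x0 * ff b p ∈ Set.range (ff b) := by
  obtain ⟨i, j, k⟩ := p
  have e : x0 * ff b (i,j,k)
      = bb b ^ ((2*b-1)*(i:ℕ) + ((2*b-1)+(2*b-1))*(j:ℕ) + 1) *
        (aa b ^ ((j:ℕ)) * dd b (sig0 k)) := by
    show x0 * (bb b^(i:ℕ) * (aa b^(j:ℕ) * dd b k)) = _
    calc x0 * (bb b^(i:ℕ) * (aa b^(j:ℕ) * dd b k))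
        = (x0*(bb b^(i:ℕ)*x0)) * ((x0*(aa b^(j:ℕ)*x0)) * (x0 * dd b k)) := by
          simp only [mul_assoc, K0 (h0b b)]
      _ = ((x0*(bb b*x0))^(i:ℕ)) * (((x0*(aa b*x0))^(j:ℕ)) * (x0 * dd b k)) := by
          rw [cpow (h0b b), cpow (h0b b)]
      _ = ((bb b^(2*b-1))^(i:ℕ)) * ((bb b^(2*b-1)*(bb b^(2*b-1)*aa b))^(j:ℕ) *
            (bb b * ((x1*(x2*x1)) * dd b k))) := by
          rw [conj0b' b hb, conj0a' b hb]
          rw [show x0 * dd b k = bb b * ((x1*(x2*x1)) * dd b k) by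
            rw [← mul_assoc, ← hx0d]]
      _ = ((bb b^(2*b-1))^(i:ℕ)) * ((bb b^((2*b-1)+(2*b-1))*aa b)^(j:ℕ) *
            (bb b * dd b (sig0 k))) := by
          rw [dtab5 b k, ← mul_assoc (bb b^(2*b-1)) (bb b^(2*b-1)), ← pow_add]
      _ = bb b^((2*b-1)*(i:ℕ)) * (bb b^(((2*b-1)+(2*b-1))*(j:ℕ)) *
            (aa b^(j:ℕ) * (bb b * dd b (sig0 k)))) := by
          rw [((hcommb b).pow_left ((2*b-1)+(2*b-1))).mul_pow, ← pow_mul, ← pow_mul,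
            mul_assoc]
      _ = bb b^((2*b-1)*(i:ℕ)) * (bb b^(((2*b-1)+(2*b-1))*(j:ℕ)) *
            (bb b * (aa b^(j:ℕ) * dd b (sig0 k)))) := by
          rw [← mul_assoc (aa b^(j:ℕ)), ((hcommb b).symm.pow_left (j:ℕ)).eq, mul_assoc]
      _ = bb b ^ ((2*b-1)*(i:ℕ) + ((2*b-1)+(2*b-1))*(j:ℕ) + 1) *
            (aa b ^ ((j:ℕ)) * dd b (sig0 k)) := by
          rw [← mul_assoc, ← mul_assoc, ← pow_add, ← pow_succ]
  rw [e]; exact memS b hb _ _ _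

end M2b

/-! ### The concrete model -/

def E0 (n : ℕ) : Equiv.Perm (ZMod n × ZMod n) :=
  Function.Involutive.toPerm (fun p => (1 - p.2, 1 - p.1)) (fun p => by simp)
def E1 (n : ℕ) : Equiv.Perm (ZMod n × ZMod n) :=
  Function.Involutive.toPerm (fun p => (p.1, - p.2)) (fun p => by simp)
def E2 (n : ℕ) : Equiv.Perm (ZMod n × ZMod n) :=
  Function.Involutive.toPerm (fun p => (p.2, p.1)) (fun p => by simp)

@[simp] lemma E0_apply (n : ℕ) (p : ZMod n × ZMod n) : E0 n p = (1 - p.2, 1 - p.1) := rfl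
@[simp] lemma E1_apply (n : ℕ) (p : ZMod n × ZMod n) : E1 n p = (p.1, - p.2) := rfl
@[simp] lemma E2_apply (n : ℕ) (p : ZMod n × ZMod n) : E2 n p = (p.2, p.1) := rfl

lemma pow4' {G : Type*} [Group G] (x : G) : x ^ 4 = x * (x * (x * x)) := by
  rw [show (4:ℕ) = 3 + 1 from rfl, pow_succ, show (3:ℕ) = 2 + 1 from rfl, pow_succ, sq]
  group

lemma E0_sq (n : ℕ) : (E0 n) ^ 2 = 1 := by
  ext p <;> simp [sq, Equiv.Perm.mul_apply]
lemma E1_sq (n : ℕ) : (E1 n) ^ 2 = 1 := by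
  ext p <;> simp [sq, Equiv.Perm.mul_apply]
lemma E2_sq (n : ℕ) : (E2 n) ^ 2 = 1 := by
  ext p <;> simp [sq, Equiv.Perm.mul_apply]
lemma E01_pow4 (n : ℕ) : (E0 n * E1 n) ^ 4 = 1 := by
  rw [pow4']; ext p <;> simp [Equiv.Perm.mul_apply] <;> ring
lemma E12_pow4 (n : ℕ) : (E1 n * E2 n) ^ 4 = 1 := by
  rw [pow4']; ext p <;> simp [Equiv.Perm.mul_apply]
lemma E02_sq (n : ℕ) : (E0 n * E2 n) ^ 2 = 1 := by
  rw [sq]; ext p <;> simp [Equiv.Perm.mul_apply]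

lemma EA_apply (n : ℕ) (p : ZMod n × ZMod n) :
    ((E0 n * E1 n * E2 n) ^ 2) p = (p.1 + 2, p.2) := by
  rw [sq]
  refine Prod.ext ?_ ?_ <;> simp [Equiv.Perm.mul_apply] <;> ring
lemma EA_pow_apply (n : ℕ) (k : ℕ) :
    ∀ p : ZMod n × ZMod n, (((E0 n * E1 n * E2 n) ^ 2) ^ k) p = (p.1 + 2 * (k : ZMod n), p.2) := by
  induction k with
  | zero => intro p; simp
  | succ k ih =>
    intro p
    rw [pow_succ', Equiv.Perm.mul_apply, EA_apply, ih]
    push_cast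
    refine Prod.ext ?_ ?_ <;> dsimp <;> ring
lemma EB_apply (n : ℕ) (p : ZMod n × ZMod n) :
    (E0 n * E1 n * E2 n * E1 n) p = (p.1 + 1, p.2 + 1) := by
  refine Prod.ext ?_ ?_ <;> simp [Equiv.Perm.mul_apply] <;> ring
lemma EB_pow_apply (n : ℕ) (k : ℕ) :
    ∀ p : ZMod n × ZMod n,
      ((E0 n * E1 n * E2 n * E1 n) ^ k) p = (p.1 + (k : ZMod n), p.2 + (k : ZMod n)) := by
  induction k with
  | zero => intro p; simp
  | succ k ih =>
    intro p
    rw [pow_succ', Equiv.Perm.mul_apply, EB_apply, ih]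
    push_cast
    refine Prod.ext ?_ ?_ <;> dsimp <;> ring
lemma Etau_pow_fst (n : ℕ) (k : ℕ) :
    ∀ p : ZMod n × ZMod n, (((E0 n * E1 n * E2 n) ^ k) p).1 = p.1 + (k : ZMod n) := by
  induction k with
  | zero => intro p; simp
  | succ k ih =>
    intro p
    have h : (E0 n * E1 n * E2 n) p = (p.1 + 1, 1 - p.2) := by
      refine Prod.ext ?_ ?_ <;> simp [Equiv.Perm.mul_apply] <;> ring
    rw [pow_succ, Equiv.Perm.mul_apply, h, ih]
    push_cast; ring
lemma Etau_pow (b : ℕ) : ((E0 (2*b) * E1 (2*b) * E2 (2*b))) ^ (2 * b) = 1 := by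
  rw [pow_mul]
  ext p <;> rw [EA_pow_apply] <;> simp
  · rw [show (2 : ZMod (2*b)) * (b : ZMod (2*b)) = ((2 * b : ℕ) : ZMod (2*b)) by push_cast; ring]
    simp [ZMod.natCast_self]

def EE (n : ℕ) : Fin 3 → Equiv.Perm (ZMod n × ZMod n) := ![E0 n, E1 n, E2 n]
@[simp] lemma EE_0 (n : ℕ) : EE n 0 = E0 n := rfl
@[simp] lemma EE_1 (n : ℕ) : EE n 1 = E1 n := rfl
@[simp] lemma EE_2 (n : ℕ) : EE n 2 = E2 n := rfl

lemma lift_rels (b : ℕ) : ∀ r ∈ rels b, FreeGroup.lift (EE (2 * b)) r = 1 := by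
  intro r hr
  simp only [rels, Set.mem_insert_iff, Set.mem_singleton_iff] at hr
  rcases hr with rfl | rfl | rfl | rfl | rfl | rfl | rfl <;>
    simp only [r0, r1, r2, map_pow, map_mul, FreeGroup.lift_apply_of, EE_0, EE_1, EE_2]
  · exact E0_sq _
  · exact E1_sq _
  · exact E2_sq _
  · exact E01_pow4 _
  · exact E12_pow4 _
  · exact E02_sq _
  · exact Etau_pow _

def phi (b : ℕ) : PresentedGroup (rels b) →* Equiv.Perm (ZMod (2*b) × ZMod (2*b)) :=
  PresentedGroup.toGroup (lift_rels b)

@[simp] lemma phi_g (b : ℕ) (i : Fin 3) : phi b (g b i) = EE (2 * b) i :=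
  PresentedGroup.toGroup.of (lift_rels b)

def DD (n : ℕ) : Fin 8 → Equiv.Perm (ZMod n × ZMod n) :=
  ![1, E1 n, E2 n, E1 n * E2 n, E2 n * E1 n,
    E1 n * (E2 n * E1 n), E2 n * (E1 n * E2 n), E1 n * (E2 n * (E1 n * E2 n))]

lemma DD_0 (n : ℕ) : DD n 0 = 1 := rfl
lemma DD_1 (n : ℕ) : DD n 1 = E1 n := rfl
lemma DD_2 (n : ℕ) : DD n 2 = E2 n := rfl
lemma DD_3 (n : ℕ) : DD n 3 = E1 n * E2 n := rfl
lemma DD_4 (n : ℕ) : DD n 4 = E2 n * E1 n := rfl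
lemma DD_5 (n : ℕ) : DD n 5 = E1 n * (E2 n * E1 n) := rfl
lemma DD_6 (n : ℕ) : DD n 6 = E2 n * (E1 n * E2 n) := rfl
lemma DD_7 (n : ℕ) : DD n 7 = E1 n * (E2 n * (E1 n * E2 n)) := rfl

lemma DD00 (n : ℕ) : ∀ k, DD n k ((0,0) : ZMod n × ZMod n) = (0,0) := by
  intro k
  fin_cases k <;>
    simp [Fin.reduceFinMk, DD_0, DD_1, DD_2, DD_3, DD_4, DD_5, DD_6, DD_7,
      Equiv.Perm.mul_apply]

lemma phi_bb (b : ℕ) : phi b (bb b) = E0 (2*b) * E1 (2*b) * E2 (2*b) * E1 (2*b) := by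
  simp only [bb, map_mul, phi_g, EE_0, EE_1, EE_2]
lemma phi_aa (b : ℕ) : phi b (aa b) = (E0 (2*b) * E1 (2*b) * E2 (2*b))^2 := by
  simp only [aa, map_pow, map_mul, phi_g, EE_0, EE_1, EE_2]
lemma phi_dd (b : ℕ) : ∀ k, phi b (dd b k) = DD (2*b) k := by
  intro k
  fin_cases k <;>
    simp only [Fin.reduceFinMk, dd_0, dd_1, dd_2, dd_3, dd_4, dd_5, dd_6, dd_7,
      DD_0, DD_1, DD_2, DD_3, DD_4, DD_5, DD_6, DD_7, map_one, map_mul, phi_g,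
      EE_0, EE_1, EE_2]

lemma phiff (b : ℕ) (p : Fin (2*b) × Fin b × Fin 8) :
    phi b (ff b p)
      = (E0 (2*b) * E1 (2*b) * E2 (2*b) * E1 (2*b)) ^ (p.1 : ℕ) *
        (((E0 (2*b) * E1 (2*b) * E2 (2*b)) ^ 2) ^ (p.2.1 : ℕ) * DD (2*b) p.2.2) := by
  simp only [ff, map_mul, map_pow, phi_bb, phi_aa, phi_dd]

lemma eval00 (n : ℕ) (i j : ℕ) (k : Fin 8) :
    ((E0 n * E1 n * E2 n * E1 n) ^ i * (((E0 n * E1 n * E2 n) ^ 2) ^ j * DD n k))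
      ((0,0) : ZMod n × ZMod n)
    = (0 + 2 * (j : ZMod n) + (i : ZMod n), 0 + (i : ZMod n)) := by
  rw [Equiv.Perm.mul_apply, Equiv.Perm.mul_apply, DD00, EA_pow_apply, EB_pow_apply]

/-! ### Surjectivity -/

open Pointwise in
lemma surjff (b : ℕ) (hb : 2 ≤ b) : Function.Surjective (ff b) := by
  classical
  have hone : (1 : PresentedGroup (rels b)) ∈ Set.range (ff b) := by
    refine ⟨(⟨0, by omega⟩, ⟨0, by omega⟩, (0 : Fin 8)), ?_⟩
    show bb b ^ (0:ℕ) * (aa b ^ (0:ℕ) * dd b 0) = 1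
    rw [dd_0, pow_zero, pow_zero, one_mul, one_mul]
  have hstab : ∀ i : Fin 3, (PresentedGroup.of i : PresentedGroup (rels b)) ∈
      MulAction.stabilizer (PresentedGroup (rels b)) (Set.range (ff b)) := by
    intro i
    rw [MulAction.mem_stabilizer_iff]
    have hsub : (PresentedGroup.of i : PresentedGroup (rels b)) • Set.range (ff b)
        ⊆ Set.range (ff b) := by
      rintro y hy
      rw [Set.mem_smul_set] at hy
      obtain ⟨z, ⟨p, rfl⟩, rfl⟩ := hy
      rw [smul_eq_mul]
      fin_cases i
      · exact stepL0 b hb p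
      · exact stepL1 b hb p
      · exact stepL2 b hb p
    exact Set.eq_of_subset_of_ncard_le hsub (Set.ncard_smul_set _ _).ge
      (Set.finite_range _)
  intro m
  have hm : m ∈ MulAction.stabilizer (PresentedGroup (rels b)) (Set.range (ff b)) :=
    PresentedGroup.generated_by (rels b) _ hstab m
  have hmS : m • Set.range (ff b) = Set.range (ff b) := MulAction.mem_stabilizer_iff.1 hm
  have hmem : m ∈ Set.range (ff b) := by
    rw [← hmS, Set.mem_smul_set]
    exact ⟨1, hone, by rw [smul_eq_mul, mul_one]⟩
  exact hmem

/-! ### arithmetic facts about `ZMod (2*b)` -/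

lemma one_ne (b : ℕ) (hb : 2 ≤ b) : (1 : ZMod (2*b)) ≠ 0 := by
  rw [show (1 : ZMod (2*b)) = ((1:ℕ) : ZMod (2*b)) by norm_num, Ne,
    ZMod.natCast_eq_zero_iff]
  intro h
  have := Nat.le_of_dvd one_pos h
  omega

lemma two_ne (b : ℕ) (hb : 2 ≤ b) : (2 : ZMod (2*b)) ≠ 0 := by
  rw [show (2 : ZMod (2*b)) = ((2:ℕ) : ZMod (2*b)) by norm_num, Ne,
    ZMod.natCast_eq_zero_iff]
  intro h
  have := Nat.le_of_dvd (by norm_num) h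
  omega

lemma neg_one_ne (b : ℕ) (hb : 2 ≤ b) : (-1 : ZMod (2*b)) ≠ 0 := by
  simpa using one_ne b hb

lemma one_ne_neg_one (b : ℕ) (hb : 2 ≤ b) : (1 : ZMod (2*b)) ≠ -1 := by
  intro h
  apply two_ne b hb
  linear_combination h

/-! ### Injectivity -/

lemma DD_inj (b : ℕ) (hb : 2 ≤ b) : Function.Injective (DD (2*b)) := by
  have f1 := one_ne b hb
  have f2 := two_ne b hb
  have f3 := neg_one_ne b hb
  have f4 := one_ne_neg_one b hb
  intro k k' h
  fin_cases k <;> fin_cases k' <;>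
    first
      | rfl
      | (exfalso
         have h10 := DFunLike.congr_fun h (((1:ZMod (2*b)), (0:ZMod (2*b))))
         have h01 := DFunLike.congr_fun h (((0:ZMod (2*b)), (1:ZMod (2*b))))
         simp only [Fin.reduceFinMk, DD_0, DD_1, DD_2, DD_3, DD_4, DD_5, DD_6, DD_7,
           Equiv.Perm.mul_apply, E1_apply, E2_apply, Equiv.Perm.one_apply,
           Prod.mk.injEq, neg_zero, neg_neg, f1, f2, f3, f4, Ne.symm f1, Ne.symm f3,
           Ne.symm f4, false_and, and_false, not_true, not_false_iff] at h10 h01)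

lemma injff (b : ℕ) (hb : 2 ≤ b) : Function.Injective (ff b) := by
  have f1 := one_ne b hb
  intro p q hpq
  obtain ⟨i, j, k⟩ := p; obtain ⟨i', j', k'⟩ := q
  have H : phi b (ff b (i,j,k)) = phi b (ff b (i',j',k')) := congrArg _ hpq
  rw [phiff, phiff] at H
  have H00 := DFunLike.congr_fun H (((0:ZMod (2*b)), (0:ZMod (2*b))))
  rw [eval00, eval00] at H00
  rw [Prod.ext_iff] at H00
  obtain ⟨He1, He2⟩ := H00
  simp only [zero_add] at He1 He2
  have hi : (i : ℕ) = (i' : ℕ) := by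
    have := congrArg ZMod.val He2
    rwa [ZMod.val_natCast, ZMod.val_natCast, Nat.mod_eq_of_lt i.isLt,
      Nat.mod_eq_of_lt i'.isLt] at this
  have hival : ((i:ℕ) : ZMod (2*b)) = ((i':ℕ) : ZMod (2*b)) := by rw [hi]
  rw [hival] at He1
  have He1' : 2 * ((j:ℕ) : ZMod (2*b)) = 2 * ((j':ℕ) : ZMod (2*b)) :=
    add_right_cancel He1
  have hj : (j : ℕ) = (j' : ℕ) := by
    have hc : ((2*(j:ℕ) : ℕ) : ZMod (2*b)) = ((2*(j':ℕ) : ℕ) : ZMod (2*b)) := by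
      push_cast
      exact He1'
    have := congrArg ZMod.val hc
    rw [ZMod.val_natCast, ZMod.val_natCast,
      Nat.mod_eq_of_lt (by have := j.isLt; omega),
      Nat.mod_eq_of_lt (by have := j'.isLt; omega)] at this
    omega
  have hii : i = i' := Fin.ext hi
  have hjj : j = j' := Fin.ext hj
  subst hii; subst hjj
  have Hk : DD (2*b) k = DD (2*b) k' := by
    have H1 := mul_left_cancel H
    exact mul_left_cancel H1
  have := DD_inj b hb Hk
  rw [this]

/-! ### order computations -/

lemma phi_ne_lemma (b : ℕ) (hb : 2 ≤ b) (x : PresentedGroup (rels b))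
    (p : ZMod (2*b) × ZMod (2*b)) (hx : (phi b x) p ≠ p) : x ≠ 1 := by
  intro hE
  apply hx
  rw [hE, map_one]
  rfl

lemma ord0 (b : ℕ) (hb : 2 ≤ b) : orderOf (g b 0) = 2 := by
  refine orderOf_eq_prime (hsq0 b) ?_
  refine phi_ne_lemma b hb _ ((0:ZMod (2*b)), (0:ZMod (2*b))) ?_
  rw [phi_g]
  simp only [EE_0, E0_apply]
  intro hE
  rw [Prod.ext_iff] at hE
  exact one_ne b hb (by simpa using hE.1)

lemma ord1 (b : ℕ) (hb : 2 ≤ b) : orderOf (g b 1) = 2 := by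
  refine orderOf_eq_prime (hsq1 b) ?_
  refine phi_ne_lemma b hb _ ((0:ZMod (2*b)), (1:ZMod (2*b))) ?_
  rw [phi_g]
  simp only [EE_1, E1_apply]
  intro hE
  rw [Prod.ext_iff] at hE
  exact one_ne_neg_one b hb (by simpa using hE.2.symm)

lemma ord2 (b : ℕ) (hb : 2 ≤ b) : orderOf (g b 2) = 2 := by
  refine orderOf_eq_prime (hsq2 b) ?_
  refine phi_ne_lemma b hb _ ((0:ZMod (2*b)), (1:ZMod (2*b))) ?_
  rw [phi_g]
  simp only [EE_2, E2_apply]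
  intro hE
  rw [Prod.ext_iff] at hE
  exact one_ne b hb (by simpa using hE.1)

lemma ord02 (b : ℕ) (hb : 2 ≤ b) : orderOf (g b 0 * g b 2) = 2 := by
  refine orderOf_eq_prime (h02 b) ?_
  refine phi_ne_lemma b hb _ ((0:ZMod (2*b)), (0:ZMod (2*b))) ?_
  rw [map_mul, phi_g, phi_g]
  simp only [EE_0, EE_2, Equiv.Perm.mul_apply, E0_apply, E2_apply]
  intro hE
  rw [Prod.ext_iff] at hE
  exact one_ne b hb (by simpa using hE.1)

lemma order_four_aux {G : Type*} [Group G] {x : G} (h4 : x ^ 4 = 1) (h2 : x ^ 2 ≠ 1) :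
    orderOf x = 4 := by
  have hd : orderOf x ∣ 4 := orderOf_dvd_of_pow_eq_one h4
  have hnd : ¬ orderOf x ∣ 2 := fun hdvd => h2 (orderOf_dvd_iff_pow_eq_one.mp hdvd)
  have hle : orderOf x ≤ 4 := Nat.le_of_dvd (by norm_num) hd
  set m := orderOf x with hm
  clear_value m
  interval_cases m <;> first | rfl | (revert hd hnd; decide)

lemma ord01 (b : ℕ) (hb : 2 ≤ b) : orderOf (g b 0 * g b 1) = 4 := by
  refine order_four_aux (h01 b) ?_
  intro hE
  have := congrArg (phi b) hE
  rw [map_pow, map_mul, phi_g, phi_g, map_one] at this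
  have h00 := DFunLike.congr_fun this (((0:ZMod (2*b)), (0:ZMod (2*b))))
  rw [sq] at h00
  simp only [EE_0, EE_1, Equiv.Perm.mul_apply, E0_apply, E1_apply,
    Equiv.Perm.one_apply, neg_zero, sub_zero, neg_neg] at h00
  rw [Prod.ext_iff] at h00
  have h1 := h00.1
  dsimp only at h1
  apply two_ne b hb
  linear_combination h1

lemma ord12 (b : ℕ) (hb : 2 ≤ b) : orderOf (g b 1 * g b 2) = 4 := by
  refine order_four_aux (h12 b) ?_
  intro hE
  have := congrArg (phi b) hE
  rw [map_pow, map_mul, phi_g, phi_g, map_one] at this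
  have h00 := DFunLike.congr_fun this (((0:ZMod (2*b)), (1:ZMod (2*b))))
  rw [sq] at h00
  simp only [EE_1, EE_2, Equiv.Perm.mul_apply, E1_apply, E2_apply,
    Equiv.Perm.one_apply, neg_zero, neg_neg] at h00
  rw [Prod.ext_iff] at h00
  have h2 := h00.2
  dsimp only at h2
  exact one_ne_neg_one b hb h2.symm

lemma ordtau (b : ℕ) (hb : 2 ≤ b) : orderOf (g b 0 * g b 1 * g b 2) = 2 * b := by
  have h1 : orderOf (g b 0 * g b 1 * g b 2) ∣ 2 * b :=
    orderOf_dvd_of_pow_eq_one (htau b)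
  have him : phi b (g b 0 * g b 1 * g b 2) = E0 (2*b) * E1 (2*b) * E2 (2*b) := by
    rw [map_mul, map_mul, phi_g, phi_g, phi_g]; rfl
  have h2 : (2*b) ∣ orderOf (phi b (g b 0 * g b 1 * g b 2)) := by
    set m := orderOf (phi b (g b 0 * g b 1 * g b 2)) with hm
    have hpow : (phi b (g b 0 * g b 1 * g b 2)) ^ m = 1 := pow_orderOf_eq_one _
    rw [him] at hpow
    have := congrArg (fun (π : Equiv.Perm (ZMod (2*b) × ZMod (2*b))) =>
      (π (((0:ZMod (2*b)), (0:ZMod (2*b))))).1) hpow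
    simp only [Etau_pow_fst, Equiv.Perm.one_apply, zero_add] at this
    exact (ZMod.natCast_eq_zero_iff m (2*b)).1 this
  have h3 : orderOf (phi b (g b 0 * g b 1 * g b 2)) ∣
      orderOf (g b 0 * g b 1 * g b 2) := orderOf_map_dvd _ _
  exact Nat.dvd_antisymm h1 (h2.trans h3)

/-! ### The theorem -/

/-- Proposition 2.3, group `M2`: it has order `16 b^2` and the listed exponents
are the true orders. -/
theorem stmt_6 (b : ℕ) (hb : 2 ≤ b) :
    Nat.card (PresentedGroup (rels b)) = 16 * b ^ 2 ∧
    orderOf (g b 0) = 2 ∧ orderOf (g b 1) = 2 ∧ orderOf (g b 2) = 2 ∧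
    orderOf (g b 0 * g b 2) = 2 ∧
    orderOf (g b 0 * g b 1) = 4 ∧ orderOf (g b 1 * g b 2) = 4 ∧
    orderOf (g b 0 * g b 1 * g b 2) = 2 * b := by
  refine ⟨?_, ord0 b hb, ord1 b hb, ord2 b hb, ord02 b hb, ord01 b hb, ord12 b hb,
    ordtau b hb⟩
  have hbij : Function.Bijective (ff b) := ⟨injff b hb, surjff b hb⟩
  have := Nat.card_eq_of_bijective (ff b) hbij
  rw [← this]
  rw [Nat.card_eq_fintype_card]
  simp only [Fintype.card_prod, Fintype.card_fin]
  ring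

end Stmt6
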